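/- arXiv:1302.2675 — 2 statements merged into one kernel-verified Lean document; each statement's English description precedes it below -/
import Mathlib

section
/- In G'', after the pruning, the DAG of profile-equivalence classes forms a leafless tree whose width is monotonically non-decreasing and bounded by n; hence there exists a stabilization level j after which each equivalence class has exactly one child class. -/
/-- Strict lexicographic order on finite 0-1 profiles. -/
def ProfLt (a b : List Bool) : Prop := List.Lex (· < ·) a b

/-- Non-strict lexicographic order on finite 0-1 profiles. -/
def ProfLe (a b : List Bool) : Prop := a = b ∨ ProfLt a b

/-- A nondeterministic Büchi automaton on infinite words. -/
structure NBW (Q : Type) (σ : Type) where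
  init : Set Q
  trans : Q → σ → Set Q
  acc : Q → Bool

namespace NBW

variable {Q σ : Type} (A : NBW Q σ) (w : ℕ → σ)

/-- `(q,i)` is a vertex of the run DAG of `A` on `w`. -/
def InDag (v : Q × ℕ) : Prop :=
  ∃ p : ℕ → Q, p 0 ∈ A.init ∧ (∀ j, j < v.2 → p (j + 1) ∈ A.trans (p j) (w j)) ∧ p v.2 = v.1

/-- Edge of the run DAG. -/
def Edge (u v : Q × ℕ) : Prop :=
  A.InDag w u ∧ v.2 = u.2 + 1 ∧ v.1 ∈ A.trans u.1 (w u.2)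

/-- An infinite initial path through the (sub-)DAG with edge relation `E`. -/
def IsPath (E : Q × ℕ → Q × ℕ → Prop) (π : ℕ → Q × ℕ) : Prop :=
  (π 0).1 ∈ A.init ∧ (π 0).2 = 0 ∧ ∀ i, E (π i) (π (i + 1))

/-- An accepting path: initial and visiting F-nodes infinitely often. -/
def AcceptingPath (E : Q × ℕ → Q × ℕ → Prop) (π : ℕ → Q × ℕ) : Prop :=
  A.IsPath E π ∧ ∀ N, ∃ i, N ≤ i ∧ A.acc (π i).1 = true

/-- Profile (sequence of acceptance labels) of the first `i+1` states of `p`. -/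
def profileOf (p : ℕ → Q) (i : ℕ) : List Bool :=
  (List.range (i + 1)).map fun j => A.acc (p j)

/-- `p` encodes a finite initial run ending at node `v`. -/
def FinRunTo (p : ℕ → Q) (v : Q × ℕ) : Prop :=
  p 0 ∈ A.init ∧ (∀ j, j < v.2 → p (j + 1) ∈ A.trans (p j) (w j)) ∧ p v.2 = v.1

/-- `h` assigns to each node the lexicographically maximal profile
over all finite initial runs to it. -/
def IsProfileFun (h : Q × ℕ → List Bool) : Prop :=
  ∀ v, A.InDag w v →
    (∃ p, A.FinRunTo w p v ∧ A.profileOf p v.2 = h v) ∧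
    ∀ p, A.FinRunTo w p v → ProfLe (A.profileOf p v.2) (h v)

/-- Edges of the pruned DAG `G'`: only edges from predecessors of
lexicographically maximal profile are kept. -/
def Edge' (h : Q × ℕ → List Bool) (u v : Q × ℕ) : Prop :=
  A.Edge w u v ∧ ∀ u', A.Edge w u' v → ¬ ProfLt (h u) (h u')

/-- `v` is finite in `G'`: it has finitely many descendants in `G'`. -/
def FiniteIn' (h : Q × ℕ → List Bool) (v : Q × ℕ) : Prop :=
  Set.Finite {u | Relation.ReflTransGen (A.Edge' w h) v u}

/-- Vertices of `G''`: vertices of the run DAG that are not finite in `G'`. -/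
def InDag'' (h : Q × ℕ → List Bool) (v : Q × ℕ) : Prop :=
  A.InDag w v ∧ ¬ A.FiniteIn' w h v

/-- Edges of `G''`. -/
def Edge'' (h : Q × ℕ → List Bool) (u v : Q × ℕ) : Prop :=
  A.Edge' w h u v ∧ A.InDag'' w h u ∧ A.InDag'' w h v

/-- `lam` is the retrospective labeling `λ^k`: ⊤ at levels ≤ k, ⊥ on F-nodes
after level k, inherited along `G'`-edges otherwise. -/
def IsRetroLabeling (h : Q × ℕ → List Bool) (k : ℕ) (lam : Q × ℕ → Bool) : Prop :=
  (∀ u, A.InDag w u → u.2 ≤ k → lam u = true) ∧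
  (∀ u, A.InDag w u → k < u.2 → A.acc u.1 = true → lam u = false) ∧
  (∀ u v, k < v.2 → A.acc v.1 = false → A.Edge' w h u v → lam v = lam u)

/-- A labeling is legal when every ⊥-labeled node is finite in `G'`. -/
def Legal (h : Q × ℕ → List Bool) (lam : Q × ℕ → Bool) : Prop :=
  ∀ u, A.InDag w u → lam u = false → A.FiniteIn' w h u

/-- `α(u)`: the number of ⊤-labeled profile-equivalence classes on `u`'s level
whose profile is strictly greater than `h u`. -/
noncomputable def alphaCount (h : Q × ℕ → List Bool) (lam : Q × ℕ → Bool) (u : Q × ℕ) : ℕ :=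
  Set.ncard {p : List Bool | ∃ v, A.InDag w v ∧ v.2 = u.2 ∧ lam v = true ∧ h v = p ∧ ProfLt (h u) p}

/-- The `k`-retrospective ranking (with top rank `m`). -/
noncomputable def retroRank (h : Q × ℕ → List Bool) (lam : Q × ℕ → Bool) (k m : ℕ)
    (u : Q × ℕ) : ℕ :=
  if u.2 ≤ k then m
  else if lam u then 2 * A.alphaCount w h lam u + 1 else 2 * A.alphaCount w h lam u

/-- `m = 2 |Q \ F|`. -/
def mBound [Fintype Q] : ℕ :=
  2 * Finset.card (Finset.univ.filter fun q => A.acc q = false)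

end NBW


section Aux

open Classical

lemma lex_append : ∀ {a b : List Bool}, List.Lex (· < ·) a b → a.length = b.length →
    ∀ l : List Bool, List.Lex (· < ·) (a ++ l) (b ++ l) := by
  intro a b hab
  induction hab with
  | nil => intro hlen; simp at hlen
  | rel hr => intro _ l; exact List.Lex.rel hr
  | cons _ ih => intro hlen l; exact List.Lex.cons (ih (by simpa using hlen) l)

lemma profLe_append {a b : List Bool} (hab : ProfLe a b) (hlen : a.length = b.length)
    (l : List Bool) : ProfLe (a ++ l) (b ++ l) := by
  rcases hab with rfl | hab
  · exact Or.inl rfl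
  · exact Or.inr (lex_append hab hlen l)

lemma profLt_iff {a b : List Bool} : ProfLt a b ↔ a < b := Iff.rfl

lemma profLe_antisymm {a b : List Bool} (h1 : ProfLe a b) (h2 : ProfLe b a) : a = b := by
  rcases h1 with rfl | h1
  · rfl
  · rcases h2 with rfl | h2
    · rfl
    · exact absurd (profLt_iff.mp h2) (lt_asymm (profLt_iff.mp h1))

lemma profLe_of_not_lt {a b : List Bool} (hab : ¬ ProfLt a b) : ProfLe b a := by
  rcases lt_trichotomy a b with hl | rfl | hl
  · exact absurd (profLt_iff.mpr hl) hab
  · exact Or.inl rfl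
  · exact Or.inr (profLt_iff.mpr hl)

lemma profLe_trans {a b c : List Bool} (h1 : ProfLe a b) (h2 : ProfLe b c) : ProfLe a c := by
  rcases h1 with rfl | h1
  · exact h2
  · rcases h2 with rfl | h2
    · exact Or.inr h1
    · exact Or.inr (profLt_iff.mpr (lt_trans (profLt_iff.mp h1) (profLt_iff.mp h2)))

end Aux

set_option linter.unusedSectionVars false

namespace NBW

variable {Q σ : Type} [Fintype Q] (A : NBW Q σ) (w : ℕ → σ)

lemma profileOf_length (p : ℕ → Q) (i : ℕ) : (A.profileOf p i).length = i + 1 := by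
  simp [NBW.profileOf]

lemma profileOf_congr {p p' : ℕ → Q} {i : ℕ} (hpp : ∀ j, j ≤ i → p j = p' j) :
    A.profileOf p i = A.profileOf p' i := by
  unfold NBW.profileOf
  refine List.map_congr_left fun j hj => ?_
  rw [hpp j (by simpa using Nat.lt_succ_iff.mp (List.mem_range.mp hj))]

lemma profileOf_succ (p : ℕ → Q) (i : ℕ) :
    A.profileOf p (i + 1) = A.profileOf p i ++ [A.acc (p (i + 1))] := by
  unfold NBW.profileOf
  rw [List.range_succ, List.map_append]
  rfl

lemma finRunTo_extend {p : ℕ → Q} {u : Q × ℕ} {q : Q} (hp : A.FinRunTo w p u)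
    (hq : q ∈ A.trans u.1 (w u.2)) :
    A.FinRunTo w (Function.update p (u.2 + 1) q) (q, u.2 + 1) ∧
    A.profileOf (Function.update p (u.2 + 1) q) (u.2 + 1) = A.profileOf p u.2 ++ [A.acc q] := by
  set p' := Function.update p (u.2 + 1) q with hp'def
  have hpe : ∀ j, j ≤ u.2 → p' j = p j := by
    intro j hj
    exact Function.update_of_ne (by omega) _ _
  have hlast : p' (u.2 + 1) = q := Function.update_self _ _ _
  refine ⟨⟨?_, ?_, hlast⟩, ?_⟩
  · rw [hpe 0 (by omega)]; exact hp.1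
  · intro j hj
    rcases Nat.lt_or_ge j u.2 with hlt | hge
    · rw [hpe j (by omega), hpe (j + 1) (by omega)]
      exact hp.2.1 j hlt
    · have hj' : j = u.2 := by omega
      rw [hj', hpe u.2 le_rfl, hlast, hp.2.2]
      exact hq
  · rw [A.profileOf_succ, hlast, A.profileOf_congr (fun j hj => (hpe j hj).symm)]

lemma edge_inDag_right {u v : Q × ℕ} (hE : A.Edge w u v) : A.InDag w v := by
  obtain ⟨⟨p, h0, hT, he⟩, hv2, htr⟩ := hE
  have hp : A.FinRunTo w p u := ⟨h0, hT, he⟩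
  obtain ⟨hrun, -⟩ := A.finRunTo_extend w hp htr
  exact ⟨_, hrun.1, by rw [hv2]; exact hrun.2.1, by rw [hv2]; exact hrun.2.2⟩

variable (h : Q × ℕ → List Bool)

lemma h_length (hprof : A.IsProfileFun w h) {u : Q × ℕ} (hu : A.InDag w u) :
    (h u).length = u.2 + 1 := by
  obtain ⟨⟨p, -, hpe⟩, -⟩ := hprof u hu
  rw [← hpe, A.profileOf_length]

lemma edge'_h (hprof : A.IsProfileFun w h) {u v : Q × ℕ} (hE : A.Edge' w h u v) :
    h v = h u ++ [A.acc v.1] := by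
  have hEdge := hE.1
  have huD : A.InDag w u := hEdge.1
  have hv2 : v.2 = u.2 + 1 := hEdge.2.1
  have htr : v.1 ∈ A.trans u.1 (w u.2) := hEdge.2.2
  have hvD : A.InDag w v := A.edge_inDag_right w hEdge
  obtain ⟨⟨p, hbest, hpe⟩, hmax⟩ := hprof v hvD
  -- the predecessor of v along the best run
  have hu'D : A.InDag w (p u.2, u.2) :=
    ⟨p, hbest.1, fun j hj => hbest.2.1 j (by omega), rfl⟩
  have hu'run : A.FinRunTo w p (p u.2, u.2) :=
    ⟨hbest.1, fun j hj => hbest.2.1 j (by omega), rfl⟩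
  have hEu' : A.Edge w (p u.2, u.2) v := by
    refine ⟨hu'D, hv2, ?_⟩
    have h1 := hbest.2.1 u.2 (by omega)
    have h2 : p v.2 = v.1 := hbest.2.2
    rw [hv2] at h2
    rw [← h2]
    exact h1
  have hle1 : ProfLe (A.profileOf p u.2) (h (p u.2, u.2)) := (hprof _ hu'D).2 p hu'run
  have hle2 : ProfLe (h (p u.2, u.2)) (h u) := profLe_of_not_lt (hE.2 _ hEu')
  have hle3 : ProfLe (A.profileOf p u.2) (h u) := profLe_trans hle1 hle2
  -- h v = profileOf p u.2 ++ [acc v.1]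
  have hsplit : h v = A.profileOf p u.2 ++ [A.acc v.1] := by
    rw [← hpe, hv2, A.profileOf_succ]
    have h2 : p (u.2 + 1) = v.1 := by rw [← hv2]; exact hbest.2.2
    rw [h2]
  have hlen : (A.profileOf p u.2).length = (h u).length := by
    rw [A.profileOf_length, A.h_length w h hprof huD]
  have hdir1 : ProfLe (h v) (h u ++ [A.acc v.1]) := by
    rw [hsplit]
    exact profLe_append hle3 hlen _
  -- other direction
  obtain ⟨q, hqrun, hqe⟩ := (hprof u huD).1
  obtain ⟨hq'run, hq'prof⟩ := A.finRunTo_extend w hqrun htr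
  have hveq : v = (v.1, u.2 + 1) := by
    rw [← hv2]
  have hq'run' : A.FinRunTo w (Function.update q (u.2 + 1) v.1) v := by
    rw [hveq]; exact hq'run
  have hdir2 : ProfLe (h u ++ [A.acc v.1]) (h v) := by
    have := hmax _ hq'run'
    have heq : A.profileOf (Function.update q (u.2 + 1) v.1) v.2 = h u ++ [A.acc v.1] := by
      rw [hv2, hq'prof, hqe]
    rwa [heq] at this
  exact profLe_antisymm hdir1 hdir2

lemma exists_child {u : Q × ℕ} (hu : A.InDag'' w h u) : ∃ v, A.Edge'' w h u v := by
  by_contra hc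
  push_neg at hc
  have hfin : ∀ v, A.Edge' w h u v → A.FiniteIn' w h v := by
    intro v hE
    by_contra hvinf
    exact hc v ⟨hE, hu, ⟨A.edge_inDag_right w hE.1, hvinf⟩⟩
  apply hu.2
  have hCfin : Set.Finite {v | A.Edge' w h u v} := by
    apply Set.Finite.subset (Set.finite_range (fun q : Q => (q, u.2 + 1)))
    rintro ⟨q, k⟩ hv
    have hk : k = u.2 + 1 := hv.1.2.1
    exact ⟨q, by rw [hk]⟩
  apply Set.Finite.subset (Set.Finite.insert u (Set.Finite.biUnion hCfin
    (fun v hv => hfin v hv)))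
  intro x hx
  rcases Relation.ReflTransGen.cases_head hx with heq | ⟨c, hc1, hc2⟩
  · exact Set.mem_insert_iff.mpr (Or.inl heq.symm)
  · exact Set.mem_insert_of_mem _ (Set.mem_biUnion hc1 hc2)

/-- The set of profile classes at level `i` of `G''`. -/
def CS (i : ℕ) : Set (List Bool) :=
  {p : List Bool | ∃ u, A.InDag'' w h u ∧ u.2 = i ∧ h u = p}

lemma CS_finite (i : ℕ) : (A.CS w h i).Finite := by
  apply Set.Finite.subset (Set.finite_range (fun q : Q => h (q, i)))
  rintro p ⟨⟨q, k⟩, hu, rfl, rfl⟩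
  exact ⟨q, rfl⟩

lemma CS_length (hprof : A.IsProfileFun w h) {i : ℕ} {p : List Bool}
    (hp : p ∈ A.CS w h i) : p.length = i + 1 := by
  obtain ⟨u, hu, hk, rfl⟩ := hp
  rw [A.h_length w h hprof hu.1, hk]

lemma CS_step (hprof : A.IsProfileFun w h) {i : ℕ} {p : List Bool}
    (hp : p ∈ A.CS w h i) : ∃ b, p ++ [b] ∈ A.CS w h (i + 1) := by
  obtain ⟨u, hu, hk, rfl⟩ := hp
  obtain ⟨v, hE⟩ := A.exists_child w h hu
  refine ⟨A.acc v.1, v, hE.2.2, ?_, ?_⟩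
  · rw [hE.1.1.2.1, hk]
  · exact A.edge'_h w h hprof hE.1

lemma CS_inj_f (hprof : A.IsProfileFun w h) (i : ℕ) :
    ∃ f : List Bool → List Bool,
      ∀ p ∈ A.CS w h i, f p ∈ A.CS w h (i + 1) ∧ ∃ b, f p = p ++ [b] := by
  classical
  have hstep : ∀ p : List Bool,
      ∃ q, p ∈ A.CS w h i → q ∈ A.CS w h (i + 1) ∧ ∃ b, q = p ++ [b] := by
    intro p
    by_cases hp : p ∈ A.CS w h i
    · obtain ⟨b, hb⟩ := A.CS_step w h hprof hp
      exact ⟨p ++ [b], fun _ => ⟨hb, b, rfl⟩⟩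
    · exact ⟨p, fun hc => absurd hc hp⟩
  choose f hf using hstep
  exact ⟨f, fun p hp => hf p hp⟩

lemma take_inj {i : ℕ} {p p' : List Bool} {b b' : Bool} (h1 : p.length = i + 1)
    (h2 : p'.length = i + 1) (hq : p ++ [b] = p' ++ [b']) : p = p' := by
  have hthis : (p ++ [b]).take (i + 1) = (p' ++ [b']).take (i + 1) := by rw [hq]
  rw [← h1, List.take_left] at hthis
  rw [h1, ← h2, List.take_left] at hthis
  exact hthis

lemma CS_injOn (hprof : A.IsProfileFun w h) {i : ℕ} {f : List Bool → List Bool}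
    (hf : ∀ p ∈ A.CS w h i, ∃ b, f p = p ++ [b]) : Set.InjOn f (A.CS w h i) := by
  intro p hp p' hp' heq
  obtain ⟨b, hb⟩ := hf p hp
  obtain ⟨b', hb'⟩ := hf p' hp'
  rw [hb, hb'] at heq
  exact take_inj (A.CS_length w h hprof hp) (A.CS_length w h hprof hp') heq

lemma width_mono (hprof : A.IsProfileFun w h) (i : ℕ) :
    (A.CS w h i).ncard ≤ (A.CS w h (i + 1)).ncard := by
  obtain ⟨f, hf⟩ := A.CS_inj_f w h hprof i
  exact Set.ncard_le_ncard_of_injOn f (fun p hp => (hf p hp).1)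
    (A.CS_injOn w h hprof (fun p hp => (hf p hp).2)) (A.CS_finite w h (i + 1))

lemma width_le (i : ℕ) : (A.CS w h i).ncard ≤ Fintype.card Q := by
  have h1 : A.CS w h i ⊆ (fun q : Q => h (q, i)) '' Set.univ := by
    rintro p ⟨⟨q, k⟩, hu, rfl, rfl⟩
    exact ⟨q, Set.mem_univ q, rfl⟩
  calc (A.CS w h i).ncard ≤ ((fun q : Q => h (q, i)) '' Set.univ).ncard :=
        Set.ncard_le_ncard h1 (Set.Finite.image _ Set.finite_univ)
    _ ≤ (Set.univ : Set Q).ncard := Set.ncard_image_le Set.finite_univ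
    _ = Fintype.card Q := by rw [Set.ncard_univ, Nat.card_eq_fintype_card]

lemma uniq_child (hprof : A.IsProfileFun w h) {i : ℕ}
    (hW : (A.CS w h (i + 1)).ncard ≤ (A.CS w h i).ncard)
    {u1 v1 u2 v2 : Q × ℕ} (h1 : A.InDag'' w h u1) (e1 : u1.2 = i)
    (h2 : A.InDag'' w h u2) (e2 : u2.2 = i) (hh : h u1 = h u2)
    (hE1 : A.Edge'' w h u1 v1) (hE2 : A.Edge'' w h u2 v2) : h v1 = h v2 := by
  by_contra hne
  set p := h u1 with hp
  have hv1 : h v1 = p ++ [A.acc v1.1] := A.edge'_h w h hprof hE1.1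
  have hv2 : h v2 = p ++ [A.acc v2.1] := by
    rw [A.edge'_h w h hprof hE2.1, ← hh]
  have m1 : h v1 ∈ A.CS w h (i + 1) := ⟨v1, hE1.2.2, by rw [hE1.1.1.2.1, e1], rfl⟩
  have m2 : h v2 ∈ A.CS w h (i + 1) := ⟨v2, hE2.2.2, by rw [hE2.1.1.2.1, e2], rfl⟩
  obtain ⟨f, hf⟩ := A.CS_inj_f w h hprof i
  have hpC : p ∈ A.CS w h i := ⟨u1, h1, e1, rfl⟩
  obtain ⟨b0, hb0⟩ := (hf p hpC).2
  have hq : ∃ q, q ∈ A.CS w h (i + 1) ∧ (∃ b, q = p ++ [b]) ∧ q ≠ f p := by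
    by_cases hc : f p = h v1
    · exact ⟨h v2, m2, ⟨_, hv2⟩, fun hcon => hne (hc.symm.trans hcon.symm)⟩
    · exact ⟨h v1, m1, ⟨_, hv1⟩, fun hcon => hc hcon.symm⟩
  obtain ⟨q, hqC, ⟨bq, hbq⟩, hqne⟩ := hq
  have hqnotin : q ∉ f '' (A.CS w h i) := by
    rintro ⟨p', hp', rfl⟩
    obtain ⟨b', hb'⟩ := (hf p' hp').2
    have hq' : p' ++ [b'] = p ++ [bq] := by rw [← hb', ← hbq]
    have hpp : p' = p :=
      take_inj (A.CS_length w h hprof hp') (A.CS_length w h hprof hpC) hq' 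
    apply hqne
    rw [← hpp]
  have hsub : insert q (f '' A.CS w h i) ⊆ A.CS w h (i + 1) := by
    intro x hx
    rcases Set.mem_insert_iff.mp hx with rfl | ⟨p', hp', rfl⟩
    · exact hqC
    · exact (hf p' hp').1
  have himg : (f '' A.CS w h i).ncard = (A.CS w h i).ncard :=
    Set.ncard_image_of_injOn (A.CS_injOn w h hprof (fun p hp => (hf p hp).2))
  have hle := Set.ncard_le_ncard hsub (A.CS_finite w h (i + 1))
  rw [Set.ncard_insert_of_notMem hqnotin ((A.CS_finite w h i).image f), himg] at hle
  omega

end NBW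

/-- in `G''` the DAG of profile-equivalence classes is a leafless
tree of monotonically non-decreasing width bounded by `n`, and hence there is a
stabilization level after which every class has exactly one child class. -/
theorem stmt8 {Q σ : Type} [Fintype Q] (A : NBW Q σ) (w : ℕ → σ) (h : Q × ℕ → List Bool)
    (hprof : A.IsProfileFun w h) :
    (∀ u, A.InDag'' w h u → ∃ v, A.Edge'' w h u v) ∧
    (∀ i : ℕ, Set.ncard {p : List Bool | ∃ u, A.InDag'' w h u ∧ u.2 = i ∧ h u = p} ≤
       Set.ncard {p : List Bool | ∃ u, A.InDag'' w h u ∧ u.2 = i + 1 ∧ h u = p}) ∧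
    (∀ i : ℕ, Set.ncard {p : List Bool | ∃ u, A.InDag'' w h u ∧ u.2 = i ∧ h u = p} ≤
       Fintype.card Q) ∧
    (∃ j : ℕ, ∀ u, A.InDag'' w h u → j ≤ u.2 →
      ∃ v, (∃ u', A.InDag'' w h u' ∧ u'.2 = u.2 ∧ h u' = h u ∧ A.Edge'' w h u' v) ∧
        ∀ v', (∃ u', A.InDag'' w h u' ∧ u'.2 = u.2 ∧ h u' = h u ∧ A.Edge'' w h u' v') →
          h v' = h v) := by
  classical
  have part1 : ∀ u, A.InDag'' w h u → ∃ v, A.Edge'' w h u v :=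
    fun u hu => A.exists_child w h hu
  have part2 : ∀ i : ℕ, (A.CS w h i).ncard ≤ (A.CS w h (i + 1)).ncard :=
    A.width_mono w h hprof
  have part3 : ∀ i : ℕ, (A.CS w h i).ncard ≤ Fintype.card Q := A.width_le w h
  refine ⟨part1, part2, part3, ?_⟩
  set W : ℕ → ℕ := fun i => (A.CS w h i).ncard with hWdef
  have hmono : Monotone W := monotone_nat_of_le_succ part2
  have hbddset : Fintype.card Q ∈ upperBounds (Set.range W) := by
    rintro x ⟨i, rfl⟩; exact part3 i
  obtain ⟨j, hj⟩ := Nat.sSup_mem (Set.range_nonempty W) ⟨Fintype.card Q, hbddset⟩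
  refine ⟨j, ?_⟩
  intro u hu hju
  have hW : W (u.2 + 1) ≤ W u.2 := by
    have h1 : W (u.2 + 1) ≤ sSup (Set.range W) :=
      le_csSup ⟨Fintype.card Q, hbddset⟩ ⟨u.2 + 1, rfl⟩
    calc W (u.2 + 1) ≤ W j := by rw [hj]; exact h1
      _ ≤ W u.2 := hmono hju
  obtain ⟨v, hv⟩ := part1 u hu
  refine ⟨v, ⟨u, hu, rfl, rfl, hv⟩, ?_⟩
  rintro v' ⟨u', h1, h2, h3, hE'⟩
  exact A.uniq_child w h hprof hW h1 h2 hu rfl h3 hE' hv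
end

section
/- The labeling λ^k is well defined: for any two nodes u, u' on the same level i with equal profiles (u ≈_i u'), λ^k(u) = λ^k(u'). -/
section Aux

variable {Q σ : Type}

lemma profLt_asymm : ∀ {a b : List Bool}, ProfLt a b → ProfLt b a → False := by
  intro a b h1
  unfold ProfLt at *
  induction h1 with
  | nil => intro h2; cases h2
  | @cons x xs ys h ih =>
    intro h2
    cases h2 with
    | cons h' => exact ih h'
    | rel h' => exact lt_irrefl _ h'
  | rel h =>
    intro h2
    cases h2 with
    | cons h' => exact lt_irrefl _ h
    | rel h' => exact absurd h (lt_asymm h')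

lemma profLt_append {a b : List Bool} (l l' : List Bool) (hlen : a.length = b.length)
    (hab : ProfLt a b) : ProfLt (a ++ l) (b ++ l') := by
  unfold ProfLt at *
  induction a generalizing b with
  | nil =>
    cases hab with
    | nil => simp at hlen
  | cons x xs ih =>
    cases b with
    | nil => simp at hlen
    | cons y ys =>
      cases hab with
      | cons h' => exact List.Lex.cons (ih (b := ys) (by simpa using hlen) h')
      | rel h' => exact List.Lex.rel h'

lemma NBW.profileOf_succ_s10 (A : NBW Q σ) (p : ℕ → Q) (n : ℕ) :
    A.profileOf p (n + 1) = A.profileOf p n ++ [A.acc (p (n + 1))] := by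
  simp [NBW.profileOf, List.range_succ]

lemma NBW.profileOf_length_s10 (A : NBW Q σ) (p : ℕ → Q) (n : ℕ) :
    (A.profileOf p n).length = n + 1 := by
  simp [NBW.profileOf]

lemma NBW.profileOf_getLast? (A : NBW Q σ) (p : ℕ → Q) (n : ℕ) :
    (A.profileOf p n).getLast? = some (A.acc (p n)) := by
  cases n with
  | zero => rfl
  | succ m => rw [NBW.profileOf_succ_s10]; simp

lemma NBW.profileOf_congr_s10 (A : NBW Q σ) {p q : ℕ → Q} {n : ℕ}
    (h : ∀ j ≤ n, p j = q j) : A.profileOf p n = A.profileOf q n := by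
  unfold NBW.profileOf
  apply List.map_congr_left
  intro j hj
  rw [h j (by simpa using Nat.lt_succ_iff.mp (List.mem_range.mp hj))]

/-- Splicing: a run to a parent node extends to a run to the child. -/
lemma NBW.splice (A : NBW Q σ) (w : ℕ → σ) {q : ℕ → Q} {x : Q} {i : ℕ} {v : Q × ℕ}
    (hq : A.FinRunTo w q (x, i)) (hv2 : v.2 = i + 1) (htr : v.1 ∈ A.trans x (w i)) :
    ∃ r, A.FinRunTo w r v ∧ A.profileOf r v.2 = A.profileOf q i ++ [A.acc v.1] := by
  obtain ⟨hq0, hqt, hqi⟩ := hq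
  refine ⟨fun j => if j ≤ i then q j else v.1, ⟨?_, ?_, ?_⟩, ?_⟩
  · simpa using hq0
  · intro j hj
    rw [hv2] at hj
    rcases Nat.lt_succ_iff_lt_or_eq.mp hj with hj' | hj'
    · simp only [Nat.le_of_lt hj', if_pos, Nat.succ_le_of_lt hj']
      simpa [Nat.le_of_lt hj', Nat.succ_le_of_lt hj'] using hqt j hj'
    · subst hj'
      simp only [le_refl, if_pos, if_neg (by omega : ¬ j + 1 ≤ j)]
      simpa [hqi] using htr
  · rw [hv2]; simp [if_neg (by omega : ¬ i + 1 ≤ i)]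
  · rw [hv2, NBW.profileOf_succ_s10]
    have h1 : A.profileOf (fun j => if j ≤ i then q j else v.1) i = A.profileOf q i :=
      A.profileOf_congr_s10 (fun j hj => by simp [hj])
    rw [h1]
    simp [if_neg (by omega : ¬ i + 1 ≤ i)]

lemma NBW.h_length_s10 (A : NBW Q σ) (w : ℕ → σ) {h : Q × ℕ → List Bool}
    (hprof : A.IsProfileFun w h) {v : Q × ℕ} (hv : A.InDag w v) :
    (h v).length = v.2 + 1 := by
  obtain ⟨⟨p, hp, hpv⟩, -⟩ := hprof v hv
  rw [← hpv, A.profileOf_length_s10]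

lemma NBW.h_getLast? (A : NBW Q σ) (w : ℕ → σ) {h : Q × ℕ → List Bool}
    (hprof : A.IsProfileFun w h) {v : Q × ℕ} (hv : A.InDag w v) :
    (h v).getLast? = some (A.acc v.1) := by
  obtain ⟨⟨p, hp, hpv⟩, -⟩ := hprof v hv
  rw [← hpv, A.profileOf_getLast?, hp.2.2]

/-- Every node at a positive level has a `G'`-parent whose profile is the
profile of the node with the last bit removed. -/
lemma NBW.parent_exists (A : NBW Q σ) (w : ℕ → σ) {h : Q × ℕ → List Bool}
    (hprof : A.IsProfileFun w h) {v : Q × ℕ} {i : ℕ} (hv : A.InDag w v)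
    (hv2 : v.2 = i + 1) :
    ∃ u, A.InDag w u ∧ u.2 = i ∧ A.Edge' w h u v ∧ h v = h u ++ [A.acc v.1] := by
  obtain ⟨⟨p, hp, hpv⟩, hmax⟩ := hprof v hv
  have hpv1 : p (i + 1) = v.1 := by rw [← hv2, hp.2.2]
  have htr : v.1 ∈ A.trans (p i) (w i) := by
    have := hp.2.1 i (by omega)
    rwa [hpv1] at this
  have hu : A.InDag w (p i, i) :=
    ⟨p, hp.1, fun j hj => hp.2.1 j (by simp at hj; omega), rfl⟩
  have hpu : A.FinRunTo w p (p i, i) :=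
    ⟨hp.1, fun j hj => hp.2.1 j (by simp at hj; omega), rfl⟩
  set u : Q × ℕ := (p i, i) with hudef
  obtain ⟨⟨q, hq, hqv⟩, humax⟩ := hprof u hu
  have hulen : (h u).length = i + 1 := A.h_length_s10 w hprof hu
  -- the contradiction machine: any run to v beating `h v` is impossible
  have contra : ∀ (x : Q) (qq : ℕ → Q), A.FinRunTo w qq (x, i) →
      v.1 ∈ A.trans x (w i) → ProfLt (h v) (A.profileOf qq i ++ [A.acc v.1]) → False := by
    intro x qq hqq htr' hlt
    obtain ⟨r, hr, hrprof⟩ := A.splice w hqq hv2 htr'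
    have hle := hmax r hr
    rw [hrprof] at hle
    rcases hle with he | hlt'
    · rw [he] at hlt; exact profLt_asymm hlt hlt
    · exact profLt_asymm hlt hlt'
  have hvprof : h v = A.profileOf p i ++ [A.acc v.1] := by
    rw [← hpv, hv2, A.profileOf_succ_s10, hpv1]
  have hui : h u = A.profileOf p i := by
    rcases humax p hpu with he | hlt
    · exact he.symm
    · exfalso
      apply contra (p i) q hq
      · exact htr
      · rw [hvprof]
        apply profLt_append
        · simp [NBW.profileOf_length_s10]
        · have hqv' : A.profileOf q i = h u := hqv
          rw [hqv']
          exact hlt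
  refine ⟨u, hu, rfl, ⟨⟨hu, by rw [hv2], htr⟩, ?_⟩, by rw [hvprof, hui]⟩
  intro u'' he'' hlt
  obtain ⟨hu''dag, hu''lev, hu''tr⟩ := he''
  have hu''2 : u''.2 = i := by omega
  obtain ⟨⟨q'', hq'', hq''v⟩, -⟩ := hprof u'' hu''dag
  apply contra u''.1 q''
  · exact ⟨hq''.1, fun j hj => hq''.2.1 j (by omega), by rw [← hu''2]; exact hq''.2.2⟩
  · rw [← hu''2]; exact hu''tr
  · rw [hvprof, ← hui]
    apply profLt_append
    · rw [hulen, A.profileOf_length_s10]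
    · rw [hu''2] at hq''v
      rw [hq''v]; exact hlt

end Aux

/-- the labeling `λ^k` is well defined: profile-equivalent nodes
on the same level share a label. -/
theorem stmt10 {Q σ : Type} (A : NBW Q σ) (w : ℕ → σ) (h : Q × ℕ → List Bool)
    (hprof : A.IsProfileFun w h) (k : ℕ) (lam : Q × ℕ → Bool)
    (hlam : A.IsRetroLabeling w h k lam)
    (u u' : Q × ℕ) (hu : A.InDag w u) (hu' : A.InDag w u')
    (hlev : u.2 = u'.2) (heq : h u = h u') :
    lam u = lam u' := by
  obtain ⟨hk, hF, hinherit⟩ := hlam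
  suffices H : ∀ n (u u' : Q × ℕ), A.InDag w u → A.InDag w u' → u.2 = n → u'.2 = n →
      h u = h u' → lam u = lam u' from H u.2 u u' hu hu' rfl hlev.symm heq
  intro n
  induction n with
  | zero =>
    intro u u' hu hu' h2 h2' _
    rw [hk u hu (by omega), hk u' hu' (by omega)]
  | succ i ih =>
    intro u u' hu hu' h2 h2' hee
    by_cases hki : i + 1 ≤ k
    · rw [hk u hu (by omega), hk u' hu' (by omega)]
    · have hki' : k < i + 1 := by omega
      have hacc : A.acc u.1 = A.acc u'.1 := by
        have l1 := A.h_getLast? w hprof hu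
        have l2 := A.h_getLast? w hprof hu'
        rw [hee, l2] at l1
        exact (Option.some.injEq _ _ ▸ l1).symm
      by_cases ha : A.acc u.1 = true
      · rw [hF u hu (by omega) ha, hF u' hu' (by omega) (hacc ▸ ha)]
      · have ha1 : A.acc u.1 = false := by simpa using ha
        have ha2 : A.acc u'.1 = false := hacc ▸ ha1
        obtain ⟨par, hpar, hpl, hpe, hph⟩ := A.parent_exists w hprof hu h2
        obtain ⟨par', hpar', hpl', hpe', hph'⟩ := A.parent_exists w hprof hu' h2'
        have h1 : lam u = lam par := hinherit par u (by omega) ha1 hpe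
        have h1' : lam u' = lam par' := hinherit par' u' (by omega) ha2 hpe'
        have hparh : h par = h par' := by
          have : h par ++ [A.acc u.1] = h par' ++ [A.acc u'.1] := by
            rw [← hph, ← hph', hee]
          exact (List.append_inj' this (by simp)).1
        rw [h1, h1', ih par par' hpar hpar' hpl hpl' hparh]
end
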